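/- Let β > 2 be irrational, let α satisfy 1/α + 1/β = 1, and let S = {⌊βn⌋ : n ∈ ℤ_{>0}}. A legal position (x,y) of 2-pile S-Nim is a P-position if and only if {x,y} = {⌊αn⌋, ⌊βn⌋} for some integer n ≥ 0. -/

import Mathlib

/-- A Nim move on two heaps: strictly decrease exactly one coordinate. -/
def Move (p q : ℕ × ℕ) : Prop :=
  (q.1 < p.1 ∧ q.2 = p.2) ∨ (q.1 = p.1 ∧ q.2 < p.2)

/-- A position of 2-pile S-Nim is legal if at least one heap is "black",
i.e. its size lies in `S` or it is empty. -/
def Legal (S : Set ℕ) (p : ℕ × ℕ) : Prop :=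
  p.1 ∈ S ∪ {0} ∨ p.2 ∈ S ∪ {0}

/-- P-positions of 2-pile S-Nim, by well-founded recursion on the total heap size:
a position is a P-position iff every legal move from it leads to a non-P-position. -/
def PPos (S : Set ℕ) (p : ℕ × ℕ) : Prop :=
  ∀ q, Move p q → Legal S q → ¬ PPos S q
termination_by p.1 + p.2
decreasing_by
  rename_i h _
  rcases h with ⟨h1, h2⟩ | ⟨h1, h2⟩ <;> omega


open scoped symmDiff

theorem ppos_iff (S : Set ℕ) (p : ℕ × ℕ) :
    PPos S p ↔ ∀ q, Move p q → Legal S q → ¬ PPos S q := by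
  rw [PPos]

/-- The candidate P-positions. -/
def Pr (α β : ℝ) (x y : ℕ) : Prop :=
  ∃ n : ℕ, ((x : ℤ) = ⌊α * n⌋ ∧ (y : ℤ) = ⌊β * n⌋) ∨
           ((x : ℤ) = ⌊β * n⌋ ∧ (y : ℤ) = ⌊α * n⌋)

theorem stmt5_facts (β : ℝ) (hβ : 2 < β) (hirr : Irrational β)
    (α : ℝ) (hα : 1 / α + 1 / β = 1) : 1 < α ∧ α < 2 ∧ Irrational α := by
  have hβ0 : 0 < β := by linarith
  have hb : 1 / β < 1 / 2 := by
    apply one_div_lt_one_div_of_lt <;> linarith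
  have hb0 : 0 < 1 / β := by positivity
  have hαne : α ≠ 0 := by
    intro h
    rw [h] at hα
    simp at hα
    nlinarith [hα]
  have he : 1 / α = 1 - 1 / β := by linarith
  have hα0 : 0 < α := one_div_pos.mp (by rw [he]; linarith)
  have hmul : α * (1 / α) = 1 := mul_one_div_cancel hαne
  have h1 : 1 < α := by nlinarith
  have h2 : α < 2 := by nlinarith
  refine ⟨h1, h2, ?_⟩
  have he2 : α = (1 - 1 / β)⁻¹ := by
    rw [← he]; field_simp
  rw [he2]
  apply Irrational.inv
  have h3 : Irrational (1 / β) := by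
    rw [one_div]; exact hirr.inv
  have h4 := h3.neg.add_ratCast 1
  convert h4 using 1
  push_cast
  ring

theorem beatty_disj {α β : ℝ} (h1 : 1 < α) (hco : 1/α + 1/β = 1) (hirr : Irrational α) :
    ∀ m n : ℕ, 0 < m → 0 < n → ⌊α * m⌋ ≠ ⌊β * n⌋ := by
  have hconj : α.HolderConjugate β := Real.holderConjugate_iff.mpr ⟨h1, by rw [← one_div, ← one_div]; exact hco⟩
  have hsym := hirr.beattySeq_symmDiff_beattySeq_pos hconj
  intro m n hm hn heq
  have hmem1 : ⌊α * m⌋ ∈ {x | ∃ k > 0, beattySeq α k = x} :=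
    ⟨(m : ℤ), by exact_mod_cast hm, by rw [beattySeq, mul_comm]; norm_cast⟩
  have hmem2 : ⌊α * m⌋ ∈ {x | ∃ k > 0, beattySeq β k = x} :=
    ⟨(n : ℤ), by exact_mod_cast hn, by rw [beattySeq, mul_comm, heq]; norm_cast⟩
  have hpos : (0:ℤ) < ⌊α * m⌋ := by
    have hm1 : (1:ℝ) ≤ (m:ℝ) := by exact_mod_cast hm
    have h2 : (1:ℝ) ≤ α * m := by nlinarith
    have h3 : (1:ℤ) ≤ ⌊α * m⌋ := Int.le_floor.mpr (by exact_mod_cast h2)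
    omega
  have hmem : ⌊α * m⌋ ∈ {x : ℤ | 0 < x} := hpos
  rw [← hsym, Set.mem_symmDiff] at hmem
  tauto

theorem beatty_total {α β : ℝ} (h1 : 1 < α) (hco : 1/α + 1/β = 1) (hirr : Irrational α) :
    ∀ x : ℕ, 0 < x →
      (∃ k : ℕ, 0 < k ∧ (x:ℤ) = ⌊α * k⌋) ∨ (∃ k : ℕ, 0 < k ∧ (x:ℤ) = ⌊β * k⌋) := by
  have hconj : α.HolderConjugate β := Real.holderConjugate_iff.mpr ⟨h1, by rw [← one_div, ← one_div]; exact hco⟩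
  have hsym := hirr.beattySeq_symmDiff_beattySeq_pos hconj
  intro x hx
  have hmem : (x:ℤ) ∈ {n : ℤ | 0 < n} := by
    simp only [Set.mem_setOf_eq]; exact_mod_cast hx
  rw [← hsym, Set.mem_symmDiff] at hmem
  rcases hmem with ⟨⟨k, hk, hkeq⟩, -⟩ | ⟨⟨k, hk, hkeq⟩, -⟩
  · left
    refine ⟨k.toNat, by omega, ?_⟩
    rw [beattySeq, mul_comm] at hkeq
    rw [← hkeq]
    congr 2
    exact_mod_cast (Int.toNat_of_nonneg (by omega : (0:ℤ) ≤ k)).symm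
  · right
    refine ⟨k.toNat, by omega, ?_⟩
    rw [beattySeq, mul_comm] at hkeq
    rw [← hkeq]
    congr 2
    exact_mod_cast (Int.toNat_of_nonneg (by omega : (0:ℤ) ≤ k)).symm

theorem floor_mono_nat {γ : ℝ} (h1 : 1 < γ) :
    ∀ m n : ℕ, m < n → ⌊γ * m⌋ < ⌊γ * n⌋ := by
  intro m n hmn
  have hcast : (m:ℝ) + 1 ≤ n := by exact_mod_cast hmn
  have h2 : (⌊γ * m⌋ : ℝ) ≤ γ * m := Int.floor_le _
  have h3 : ((⌊γ * m⌋ + 1 : ℤ) : ℝ) ≤ γ * n := by push_cast; nlinarith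
  have h4 := Int.le_floor.mpr h3
  omega

theorem stmt5_main (β : ℝ) (hβ : 2 < β) (hirr : Irrational β)
    (α : ℝ) (hα : 1 / α + 1 / β = 1)
    (S : Set ℕ) (hS : S = {m : ℕ | ∃ n : ℕ, 0 < n ∧ (m : ℤ) = ⌊β * n⌋}) :
    ∀ x y : ℕ, Legal S (x, y) → (PPos S (x, y) ↔ Pr α β x y) := by
  subst hS
  obtain ⟨h1, h2, hairr⟩ := stmt5_facts β hβ hirr α hα
  have hb1 : (1:ℝ) < β := by linarith
  have hdisj := beatty_disj h1 hα hairr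
  have htot := beatty_total h1 hα hairr
  have hAmono := floor_mono_nat h1
  have hBmono := floor_mono_nat hb1
  have hA0 : ⌊α * ((0:ℕ):ℝ)⌋ = 0 := by norm_num
  have hB0 : ⌊β * ((0:ℕ):ℝ)⌋ = 0 := by norm_num
  have hAge : ∀ n : ℕ, (n:ℤ) ≤ ⌊α * n⌋ := by
    intro n
    apply Int.le_floor.mpr
    push_cast
    nlinarith [Nat.cast_nonneg (α := ℝ) n]
  have hAlt2 : ∀ n : ℕ, 0 < n → ⌊α * n⌋ < 2 * n := by
    intro n hn
    apply Int.floor_lt.mpr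
    push_cast
    nlinarith [(by exact_mod_cast hn : (1:ℝ) ≤ (n:ℝ))]
  have hB2 : ∀ n : ℕ, 2 * (n:ℤ) ≤ ⌊β * n⌋ := by
    intro n
    apply Int.le_floor.mpr
    push_cast
    nlinarith [Nat.cast_nonneg (α := ℝ) n]
  have hAinj : ∀ m n : ℕ, ⌊α * m⌋ = ⌊α * n⌋ → m = n := by
    intro m n h
    rcases Nat.lt_trichotomy m n with h' | h' | h'
    · exact absurd (hAmono m n h') (by omega)
    · exact h'
    · exact absurd (hAmono n m h') (by omega)
  have hBinj : ∀ m n : ℕ, ⌊β * m⌋ = ⌊β * n⌋ → m = n := by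
    intro m n h
    rcases Nat.lt_trichotomy m n with h' | h' | h'
    · exact absurd (hBmono m n h') (by omega)
    · exact h'
    · exact absurd (hBmono n m h') (by omega)
  have hAltinv : ∀ m n : ℕ, ⌊α * m⌋ < ⌊α * n⌋ → m < n := by
    intro m n h
    rcases Nat.lt_trichotomy m n with h' | h' | h'
    · exact h'
    · subst h'; omega
    · exact absurd (hAmono n m h') (by omega)
  have hcross : ∀ n m : ℕ, ⌊α * n⌋ = ⌊β * m⌋ → n = 0 ∧ m = 0 := by
    intro n m h
    rcases Nat.eq_zero_or_pos n with rfl | hn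
    · refine ⟨rfl, ?_⟩
      have := hB2 m
      omega
    rcases Nat.eq_zero_or_pos m with rfl | hm
    · have := hAge n
      omega
    · exact absurd h (hdisj n m hn hm)
  set S : Set ℕ := {m : ℕ | ∃ n : ℕ, 0 < n ∧ (m : ℤ) = ⌊β * n⌋} with hSdef
  -- no legal move from a candidate P-position reaches another candidate
  have nomove : ∀ x y u v : ℕ, Pr α β x y → Move (x, y) (u, v) → ¬ Pr α β u v := by
    rintro x y u v ⟨n, hn⟩ hmv ⟨m, hm⟩
    simp only [Move] at hmv
    rcases hmv with ⟨hlt, heqc⟩ | ⟨heqc, hlt⟩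
    · -- u < x, v = y
      have hlt' : (u:ℤ) < x := by exact_mod_cast hlt
      have heq' : (v:ℤ) = y := by exact_mod_cast heqc
      rcases hn with ⟨hx, hy⟩ | ⟨hx, hy⟩ <;> rcases hm with ⟨hu, hv⟩ | ⟨hu, hv⟩
      · have hmn : m = n := hBinj m n (by omega)
        subst hmn; omega
      · obtain ⟨hm0, hn0⟩ := hcross m n (by omega)
        subst hm0; subst hn0; omega
      · obtain ⟨hn0, hm0⟩ := hcross n m (by omega)
        subst hm0; subst hn0; omega
      · have hmn : m = n := hAinj m n (by omega)
        subst hmn; omega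
    · -- u = x, v < y
      have hlt' : (v:ℤ) < y := by exact_mod_cast hlt
      have heq' : (u:ℤ) = x := by exact_mod_cast heqc
      rcases hn with ⟨hx, hy⟩ | ⟨hx, hy⟩ <;> rcases hm with ⟨hu, hv⟩ | ⟨hu, hv⟩
      · have hmn : m = n := hAinj m n (by omega)
        subst hmn; omega
      · obtain ⟨hn0, hm0⟩ := hcross n m (by omega)
        subst hm0; subst hn0; omega
      · obtain ⟨hm0, hn0⟩ := hcross m n (by omega)
        subst hm0; subst hn0; omega
      · have hmn : m = n := hBinj m n (by omega)
        subst hmn; omega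
  -- from a legal non-candidate with second coordinate "black", find a move to a candidate
  have find1 : ∀ x y : ℕ, (∃ m : ℕ, (y:ℤ) = ⌊β * m⌋) → ¬ Pr α β x y →
      ∃ u v : ℕ, Move (x, y) (u, v) ∧ Legal S (u, v) ∧ Pr α β u v := by
    rintro x y ⟨m, hy⟩ hnp
    rcases lt_trichotomy ((x:ℤ)) ⌊α * m⌋ with hlt | heq | hgt
    · -- x < ⌊α m⌋, so m > 0 and we move y down
      have hm0 : 0 < m := by
        rcases Nat.eq_zero_or_pos m with rfl | h
        · omega
        · exact h
      have hy0 : 2 * (m:ℤ) ≤ y := by have := hB2 m; omega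
      rcases Nat.eq_zero_or_pos x with rfl | hx0
      · -- x = 0 : move to (0,0)
        refine ⟨0, 0, Or.inr ⟨rfl, by omega⟩, Or.inr (Or.inr rfl), 0, Or.inl ⟨by omega, by omega⟩⟩
      · rcases htot x hx0 with ⟨k, hk0, hkx⟩ | ⟨k, hk0, hkx⟩
        · -- x = ⌊α k⌋ with k < m : move y to ⌊β k⌋
          have hkm : k < m := hAltinv k m (by omega)
          have hBlt : ⌊β * k⌋ < ⌊β * m⌋ := hBmono k m hkm
          have hBk0 : 0 ≤ ⌊β * k⌋ := by have := hB2 k; omega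
          have hcastv : (((⌊β * k⌋).toNat : ℕ) : ℤ) = ⌊β * k⌋ := Int.toNat_of_nonneg hBk0
          refine ⟨x, (⌊β * k⌋).toNat, Or.inr ⟨rfl, by omega⟩, ?_, k, Or.inl ⟨hkx, hcastv⟩⟩
          exact Or.inr (Or.inl ⟨k, hk0, hcastv⟩)
        · -- x = ⌊β k⌋ : move y to ⌊α k⌋
          have hk2 := hAlt2 k hk0
          have hBk := hB2 k
          have hm2 := hAlt2 m hm0
          have hAk0 : 0 ≤ ⌊α * k⌋ := by have := hAge k; omega
          have hcastv : (((⌊α * k⌋).toNat : ℕ) : ℤ) = ⌊α * k⌋ := Int.toNat_of_nonneg hAk0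
          refine ⟨x, (⌊α * k⌋).toNat, Or.inr ⟨rfl, by omega⟩, ?_, k, Or.inr ⟨hkx, hcastv⟩⟩
          exact Or.inl (Or.inl ⟨k, hk0, hkx⟩)
    · exact absurd ⟨m, Or.inl ⟨heq, hy⟩⟩ hnp
    · -- x > ⌊α m⌋ : move x down to ⌊α m⌋
      have hAm0 : 0 ≤ ⌊α * m⌋ := by have := hAge m; omega
      have hcastu : (((⌊α * m⌋).toNat : ℕ) : ℤ) = ⌊α * m⌋ := Int.toNat_of_nonneg hAm0
      refine ⟨(⌊α * m⌋).toNat, y, Or.inl ⟨by omega, rfl⟩, ?_, m, Or.inl ⟨hcastu, hy⟩⟩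
      rcases Nat.eq_zero_or_pos m with rfl | hm0
      · exact Or.inr (Or.inr (by simp only [Set.mem_singleton_iff]; omega))
      · exact Or.inr (Or.inl ⟨m, hm0, hy⟩)
  -- symmetry helpers
  have prswap : ∀ x y : ℕ, Pr α β x y → Pr α β y x := by
    rintro x y ⟨n, h | h⟩
    · exact ⟨n, Or.inr ⟨h.2, h.1⟩⟩
    · exact ⟨n, Or.inl ⟨h.2, h.1⟩⟩
  -- the main induction
  have key : ∀ N : ℕ, ∀ x y : ℕ, x + y ≤ N → Legal S (x, y) →
      (PPos S (x, y) ↔ Pr α β x y) := by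
    intro N
    induction N with
    | zero =>
      intro x y hxy _
      obtain rfl : x = 0 := by omega
      obtain rfl : y = 0 := by omega
      constructor
      · intro _
        exact ⟨0, Or.inl ⟨by omega, by omega⟩⟩
      · intro _
        rw [ppos_iff]
        rintro q (⟨h, -⟩ | ⟨-, h⟩) <;> omega
    | succ N ih =>
      intro x y hxy hleg
      constructor
      · intro hP
        by_contra hnp
        -- y-black or x-black
        have hex : ∃ u v : ℕ, Move (x, y) (u, v) ∧ Legal S (u, v) ∧ Pr α β u v := by
          have hblack : (∃ m : ℕ, (y:ℤ) = ⌊β * m⌋) ∨ (∃ m : ℕ, (x:ℤ) = ⌊β * m⌋) := by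
            rcases hleg with h | h
            · right
              rcases h with h | h
              · obtain ⟨n, hn0, hn⟩ := h
                exact ⟨n, hn⟩
              · exact ⟨0, by simp only [Set.mem_singleton_iff] at h; omega⟩
            · left
              rcases h with h | h
              · obtain ⟨n, hn0, hn⟩ := h
                exact ⟨n, hn⟩
              · exact ⟨0, by simp only [Set.mem_singleton_iff] at h; omega⟩
          rcases hblack with h | h
          · exact find1 x y h hnp
          · obtain ⟨u, v, hmv, hlg, hpr⟩ := find1 y x h (fun hc => hnp (prswap y x hc))
            refine ⟨v, u, ?_, ?_, prswap u v hpr⟩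
            · simp only [Move] at hmv ⊢; tauto
            · rcases hlg with h' | h'
              · exact Or.inr h'
              · exact Or.inl h'
        obtain ⟨u, v, hmv, hlg, hpr⟩ := hex
        have hsum : u + v ≤ N := by
          simp only [Move] at hmv
          omega
        have hPuv : PPos S (u, v) := (ih u v hsum hlg).mpr hpr
        rw [ppos_iff] at hP
        exact hP (u, v) hmv hlg hPuv
      · intro hpr
        rw [ppos_iff]
        rintro ⟨u, v⟩ hmv hlg hPq
        have hsum : u + v ≤ N := by
          simp only [Move] at hmv
          omega
        exact nomove x y u v hpr hmv ((ih u v hsum hlg).mp hPq)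
  intro x y hleg
  exact key (x + y) x y le_rfl hleg


/-- Theorem 2 of the paper: for an irrational `β > 2`,
`α` with `1/α + 1/β = 1`, and `S = {⌊βn⌋ : n > 0}`, a legal position `(x,y)` of
2-pile S-Nim is a P-position iff, up to order, `(x,y) = (⌊αn⌋, ⌊βn⌋)` for some `n ≥ 0`. -/
theorem stmt5 (β : ℝ) (hβ : 2 < β) (hirr : Irrational β)
    (α : ℝ) (hα : 1 / α + 1 / β = 1)
    (S : Set ℕ) (hS : S = {m : ℕ | ∃ n : ℕ, 0 < n ∧ (m : ℤ) = ⌊β * n⌋})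
    (x y : ℕ) (hleg : Legal S (x, y)) :
    PPos S (x, y) ↔
      ∃ n : ℕ, ((x : ℤ) = ⌊α * n⌋ ∧ (y : ℤ) = ⌊β * n⌋) ∨
               ((x : ℤ) = ⌊β * n⌋ ∧ (y : ℤ) = ⌊α * n⌋) := by
  exact stmt5_main β hβ hirr α hα S hS x y hleg
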